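/- Let G' be obtained from a graph G by a ΔY move on a triangle of G (delete the three edges of the triangle and add a new vertex joined to its three corners). If G is nonplanar, then G' is nonplanar. -/

import Mathlib

open SimpleGraph

/-- `H` is a minor of `G`: branch-set definition. -/
def IsMinor {W V : Type*} (H : SimpleGraph W) (G : SimpleGraph V) : Prop :=
  ∃ f : W → Set V,
    (∀ w, (f w).Nonempty) ∧
    (∀ w, (G.induce (f w)).Connected) ∧
    (Pairwise fun w₁ w₂ => Disjoint (f w₁) (f w₂)) ∧
    ∀ ⦃w₁ w₂⦄, H.Adj w₁ w₂ → ∃ v₁ ∈ f w₁, ∃ v₂ ∈ f w₂, G.Adj v₁ v₂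

/-- The complete graph on 5 vertices. -/
def K5 : SimpleGraph (Fin 5) := ⊤

/-- The complete bipartite graph `K_{3,3}`. -/
def K33 : SimpleGraph (Fin 3 ⊕ Fin 3) := completeBipartiteGraph (Fin 3) (Fin 3)

/-- Planarity in Wagner's form: no `K₅` minor and no `K_{3,3}` minor. -/
def IsPlanar {V : Type*} (G : SimpleGraph V) : Prop :=
  ¬ IsMinor K5 G ∧ ¬ IsMinor K33 G

/-- `G` is `n`-apex: some set of at most `n` vertices can be deleted to leave a planar graph. -/
def IsNApex {V : Type*} (G : SimpleGraph V) (n : ℕ) : Prop :=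
  ∃ U : Finset V, U.card ≤ n ∧ IsPlanar (G.induce (↑U : Set V)ᶜ)

/-- `u w` is an edge of the triangle `a b c`. -/
def triEdge {V : Type*} (a b c u w : V) : Prop :=
  (u = a ∧ w = b) ∨ (u = b ∧ w = a) ∨ (u = b ∧ w = c) ∨ (u = c ∧ w = b) ∨
  (u = a ∧ w = c) ∨ (u = c ∧ w = a)

/-- The result of a ΔY move on the triangle `a b c`: delete its three edges and
add a new vertex (`none`) adjacent exactly to `a`, `b`, `c`. -/
def deltaY {V : Type*} (G : SimpleGraph V) (a b c : V) : SimpleGraph (Option V) :=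
  SimpleGraph.fromRel (fun x y =>
    match x, y with
    | some u, some w => G.Adj u w ∧ ¬ triEdge a b c u w
    | none, some u => u = a ∨ u = b ∨ u = c
    | _, _ => False)

section Aux
variable {V : Type*} {G : SimpleGraph V} {a b c : V}

lemma tri_mem {u w : V} (h : triEdge a b c u w) :
    (u = a ∨ u = b ∨ u = c) ∧ (w = a ∨ w = b ∨ w = c) := by
  unfold triEdge at h; tauto

lemma tri_ne (hab : a ≠ b) (hbc : b ≠ c) (hac : a ≠ c) {u w : V}
    (h : triEdge a b c u w) : u ≠ w := by
  unfold triEdge at h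
  rcases h with ⟨rfl, rfl⟩|⟨rfl, rfl⟩|⟨rfl, rfl⟩|⟨rfl, rfl⟩|⟨rfl, rfl⟩|⟨rfl, rfl⟩ <;>
    first | exact hab | exact hab.symm | exact hbc | exact hbc.symm | exact hac | exact hac.symm

lemma adj_some {u w : V} (h : G.Adj u w) (ht : ¬ triEdge a b c u w) :
    (deltaY G a b c).Adj (some u) (some w) := by
  rw [deltaY, fromRel_adj]
  exact ⟨by simpa using h.ne, Or.inl ⟨h, ht⟩⟩

lemma adj_none {u : V} (h : u = a ∨ u = b ∨ u = c) :
    (deltaY G a b c).Adj none (some u) := by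
  rw [deltaY, fromRel_adj]
  exact ⟨by simp, Or.inl h⟩

lemma induce_conn (s : Set V)
    (hs : ∀ u ∈ s, ∀ v ∈ s, ¬ triEdge a b c u v)
    (h : (G.induce s).Connected) :
    ((deltaY G a b c).induce (Option.some '' s)).Connected := by
  refine h.map ⟨fun x => ⟨some x.1, ⟨x.1, x.2, rfl⟩⟩, ?_⟩ ?_
  · intro x y hxy
    exact adj_some hxy (hs x.1 x.2 y.1 y.2)
  · rintro ⟨_, v, hv, rfl⟩; exact ⟨⟨v, hv⟩, rfl⟩

lemma induce_conn_hub (s : Set V) (s0 : V) (hs0 : s0 ∈ s)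
    (hs0S : s0 = a ∨ s0 = b ∨ s0 = c)
    (h : (G.induce s).Connected) :
    ((deltaY G a b c).induce (insert none (Option.some '' s))).Connected := by
  set T : Set (Option V) := insert none (Option.some '' s) with hT
  have hmem : ∀ x : V, x ∈ s → (some x : Option V) ∈ T := fun x hx =>
    Set.mem_insert_iff.2 (Or.inr ⟨x, hx, rfl⟩)
  have hnone : (none : Option V) ∈ T := Set.mem_insert _ _
  have step : ∀ (u v : V) (hu : u ∈ s) (hv : v ∈ s), G.Adj u v →
      ((deltaY G a b c).induce T).Reachable ⟨some u, hmem _ hu⟩ ⟨some v, hmem _ hv⟩ := by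
    intro u v hu hv huv
    by_cases ht : triEdge a b c u v
    · obtain ⟨hu', hv'⟩ := tri_mem ht
      have e1 : ((deltaY G a b c).induce T).Adj ⟨some u, hmem _ hu⟩ ⟨none, hnone⟩ :=
        (adj_none (G := G) hu').symm
      have e2 : ((deltaY G a b c).induce T).Adj ⟨none, hnone⟩ ⟨some v, hmem _ hv⟩ :=
        adj_none (G := G) hv'
      exact e1.reachable.trans e2.reachable
    · have e : ((deltaY G a b c).induce T).Adj ⟨some u, hmem _ hu⟩ ⟨some v, hmem _ hv⟩ :=
        adj_some huv ht
      exact e.reachable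
  have key : ∀ (x y : V) (hx : x ∈ s) (hy : y ∈ s),
      ((deltaY G a b c).induce T).Reachable ⟨some x, hmem _ hx⟩ ⟨some y, hmem _ hy⟩ := by
    intro x y hx hy
    obtain ⟨p⟩ := h.preconnected ⟨x, hx⟩ ⟨y, hy⟩
    have : ∀ (u v : ↥s), (G.induce s).Walk u v →
        ((deltaY G a b c).induce T).Reachable ⟨some u.1, hmem _ u.2⟩ ⟨some v.1, hmem _ v.2⟩ := by
      intro u v p
      induction p with
      | nil => exact Reachable.refl _
      | @cons u' v' w' huv p ih => exact (step u'.1 v'.1 u'.2 v'.2 huv).trans ih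
    exact this ⟨x, hx⟩ ⟨y, hy⟩ p
  rw [connected_iff_exists_forall_reachable]
  refine ⟨⟨none, hnone⟩, ?_⟩
  rintro ⟨x, hx⟩
  match x, hx with
  | none, _ => exact Reachable.refl _
  | some x, hx =>
    have hxs : x ∈ s := by
      rcases Set.mem_insert_iff.1 hx with h' | ⟨y, hy, he⟩
      · exact absurd h' (by simp)
      · cases he; exact hy
    have e0 : ((deltaY G a b c).induce T).Adj ⟨none, hnone⟩ ⟨some s0, hmem _ hs0⟩ :=
      adj_none (G := G) hs0S
    have r1 := e0.reachable
    exact r1.trans (key s0 x hs0 hxs)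


lemma conn_single {V' : Type*} (G2 : SimpleGraph V') (x : V') :
    (G2.induce {x}).Connected := by
  rw [connected_iff]
  refine ⟨?_, ⟨⟨x, rfl⟩⟩⟩
  rintro ⟨u, hu⟩ ⟨v, hv⟩
  have : u = v := by
    simp only [Set.mem_singleton_iff] at hu hv; rw [hu, hv]
  subst this
  exact Reachable.refl _

lemma lemM {W : Type*} (H : SimpleGraph W) (f : W → Set V)
    (hne : ∀ w, (f w).Nonempty) (hconn : ∀ w, (G.induce (f w)).Connected)
    (hdisj : Pairwise fun w₁ w₂ => Disjoint (f w₁) (f w₂))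
    (hadj : ∀ ⦃w₁ w₂⦄, H.Adj w₁ w₂ → ∃ v₁ ∈ f w₁, ∃ v₂ ∈ f w₂, G.Adj v₁ v₂)
    (w0 : W) (s0 : V) (hs0 : s0 ∈ f w0) (hs0S : s0 = a ∨ s0 = b ∨ s0 = c)
    (Hin : ∀ w, w ≠ w0 → ∀ u ∈ f w, ∀ v ∈ f w, ¬ triEdge a b c u v)
    (Hcr : ∀ w1 w2, H.Adj w1 w2 → w1 ≠ w0 → w2 ≠ w0 →
      ∀ u ∈ f w1, ∀ v ∈ f w2, ¬ triEdge a b c u v) :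
    IsMinor H (deltaY G a b c) := by
  classical
  refine ⟨fun w => if w = w0 then insert none (Option.some '' f w)
      else Option.some '' f w, ?_, ?_, ?_, ?_⟩
  · intro w
    dsimp only
    split
    · exact ⟨none, Set.mem_insert _ _⟩
    · exact ((hne w).image _)
  · intro w
    dsimp only
    by_cases hw : w = w0
    · rw [if_pos hw]; subst hw
      exact induce_conn_hub (f w) s0 hs0 hs0S (hconn w)
    · rw [if_neg hw]
      exact induce_conn (f w) (Hin w hw) (hconn w)
  · have memg : ∀ (w : W) (x : Option V),
        x ∈ (if w = w0 then insert none (Option.some '' f w) else Option.some '' f w) →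
        (x = none ∧ w = w0) ∨ ∃ v ∈ f w, x = some v := by
      intro w x hx
      split at hx
      · rcases Set.mem_insert_iff.1 hx with rfl | ⟨v, hv, rfl⟩
        · exact Or.inl ⟨rfl, by assumption⟩
        · exact Or.inr ⟨v, hv, rfl⟩
      · obtain ⟨v, hv, rfl⟩ := hx
        exact Or.inr ⟨v, hv, rfl⟩
    intro w1 w2 h12
    dsimp only
    rw [Set.disjoint_left]
    intro x hx1 hx2
    rcases memg w1 x hx1 with ⟨rfl, rfl⟩ | ⟨v1, hv1, rfl⟩
    · rcases memg w2 none hx2 with ⟨_, h2⟩ | ⟨v2, hv2, h'⟩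
      · exact h12 h2.symm
      · exact nomatch h'
    · rcases memg w2 (some v1) hx2 with ⟨h', _⟩ | ⟨v2, hv2, h'⟩
      · exact nomatch h'
      · have hv12 : v1 = v2 := Option.some.inj h'
        subst hv12
        exact Set.disjoint_left.1 (hdisj h12) hv1 hv2
  · have memg : ∀ (w : W) (v : V), v ∈ f w →
        (some v : Option V) ∈ (if w = w0 then insert none (Option.some '' f w)
          else Option.some '' f w) := by
      intro w v hv
      split
      · exact Set.mem_insert_iff.2 (Or.inr ⟨v, hv, rfl⟩)
      · exact ⟨v, hv, rfl⟩
    intro w1 w2 h12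
    dsimp only
    obtain ⟨v1, hv1, v2, hv2, hG12⟩ := hadj h12
    by_cases ht : triEdge a b c v1 v2
    · obtain ⟨h1S, h2S⟩ := tri_mem ht
      by_cases hw1 : w1 = w0
      · subst hw1
        refine ⟨none, by simp, some v2, memg w2 v2 hv2, adj_none h2S⟩
      · by_cases hw2 : w2 = w0
        · subst hw2
          exact ⟨some v1, memg w1 v1 hv1, none, by simp, (adj_none h1S).symm⟩
        · exact absurd ht (Hcr w1 w2 h12 hw1 hw2 v1 hv1 v2 hv2)
    · exact ⟨some v1, memg w1 v1 hv1, some v2, memg w2 v2 hv2, adj_some hG12 ht⟩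

lemma lemM0 {W : Type*} (H : SimpleGraph W) (f : W → Set V)
    (hne : ∀ w, (f w).Nonempty) (hconn : ∀ w, (G.induce (f w)).Connected)
    (hdisj : Pairwise fun w₁ w₂ => Disjoint (f w₁) (f w₂))
    (hadj : ∀ ⦃w₁ w₂⦄, H.Adj w₁ w₂ → ∃ v₁ ∈ f w₁, ∃ v₂ ∈ f w₂, G.Adj v₁ v₂)
    (hS : ∀ w, ∀ v ∈ f w, ¬ (v = a ∨ v = b ∨ v = c)) :
    IsMinor H (deltaY G a b c) := by
  refine ⟨fun w => Option.some '' f w, fun w => (hne w).image _, ?_, ?_, ?_⟩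
  · intro w
    exact induce_conn (f w)
      (fun u hu v hv ht => hS w u hu (tri_mem ht).1) (hconn w)
  · intro w1 w2 h12
    exact Set.disjoint_image_of_injective (Option.some_injective V) (hdisj h12)
  · intro w1 w2 h12
    obtain ⟨v1, hv1, v2, hv2, hG12⟩ := hadj h12
    have ht : ¬ triEdge a b c v1 v2 := fun ht => hS w1 v1 hv1 (tri_mem ht).1
    exact ⟨some v1, ⟨v1, hv1, rfl⟩, some v2, ⟨v2, hv2, rfl⟩, adj_some hG12 ht⟩

section Derived
variable (hab : G.Adj a b) (hbc : G.Adj b c) (hac : G.Adj a c)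
include hab hbc hac

lemma lemM_pair {W : Type*} (H : SimpleGraph W) (f : W → Set V)
    (hne : ∀ w, (f w).Nonempty) (hconn : ∀ w, (G.induce (f w)).Connected)
    (hdisj : Pairwise fun w₁ w₂ => Disjoint (f w₁) (f w₂))
    (hadj : ∀ ⦃w₁ w₂⦄, H.Adj w₁ w₂ → ∃ v₁ ∈ f w₁, ∃ v₂ ∈ f w₂, G.Adj v₁ v₂)
    (w0 : W) (s t : V) (hs : s ∈ f w0) (ht : t ∈ f w0)
    (hsS : s = a ∨ s = b ∨ s = c) (htS : t = a ∨ t = b ∨ t = c) (hst : s ≠ t) :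
    IsMinor H (deltaY G a b c) := by
  have hX : ∀ w1, w1 ≠ w0 → ∀ u ∈ f w1, ∀ w2, w2 ≠ w0 → ∀ v ∈ f w2,
      ¬ triEdge a b c u v := by
    intro w1 hw1 u hu w2 hw2 v hv htri
    obtain ⟨huS, hvS⟩ := tri_mem htri
    have huv : u ≠ v := tri_ne hab.ne hbc.ne hac.ne htri
    have hus : u ≠ s := fun h => hw1 (by
      by_contra h'
      exact Set.disjoint_left.1 (hdisj h') (h ▸ hu) hs)
    have hut : u ≠ t := fun h => hw1 (by
      by_contra h'
      exact Set.disjoint_left.1 (hdisj h') (h ▸ hu) ht)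
    have hvs : v ≠ s := fun h => hw2 (by
      by_contra h'
      exact Set.disjoint_left.1 (hdisj h') (h ▸ hv) hs)
    have hvt : v ≠ t := fun h => hw2 (by
      by_contra h'
      exact Set.disjoint_left.1 (hdisj h') (h ▸ hv) ht)
    have hane := hab.ne
    have hbne := hbc.ne
    have hcne := hac.ne
    rcases huS with rfl | rfl | rfl <;> rcases hvS with rfl | rfl | rfl <;>
      rcases hsS with rfl | rfl | rfl <;> rcases htS with rfl | rfl | rfl <;>
        simp_all
  exact lemM H f hne hconn hdisj hadj w0 s hs hsS
    (fun w hw u hu v hv => hX w hw u hu w hw v hv)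
    (fun w1 w2 _ hw1 hw2 u hu v hv => hX w1 hw1 u hu w2 hw2 v hv)

lemma lemM_notall {W : Type*} (H : SimpleGraph W) (f : W → Set V)
    (hne : ∀ w, (f w).Nonempty) (hconn : ∀ w, (G.induce (f w)).Connected)
    (hdisj : Pairwise fun w₁ w₂ => Disjoint (f w₁) (f w₂))
    (hadj : ∀ ⦃w₁ w₂⦄, H.Adj w₁ w₂ → ∃ v₁ ∈ f w₁, ∃ v₂ ∈ f w₂, G.Adj v₁ v₂)
    (w0 : W) (s0 : V) (hs0 : s0 ∈ f w0) (hs0S : s0 = a ∨ s0 = b ∨ s0 = c)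
    (m : V) (hmS : m = a ∨ m = b ∨ m = c) (hm : ∀ w, m ∉ f w) :
    IsMinor H (deltaY G a b c) := by
  have hX : ∀ w1, w1 ≠ w0 → ∀ u ∈ f w1, ∀ w2, w2 ≠ w0 → ∀ v ∈ f w2,
      ¬ triEdge a b c u v := by
    intro w1 hw1 u hu w2 hw2 v hv htri
    obtain ⟨huS, hvS⟩ := tri_mem htri
    have huv : u ≠ v := tri_ne hab.ne hbc.ne hac.ne htri
    have hus : u ≠ s0 := fun h => hw1 (by
      by_contra h'
      exact Set.disjoint_left.1 (hdisj h') (h ▸ hu) hs0)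
    have hvs : v ≠ s0 := fun h => hw2 (by
      by_contra h'
      exact Set.disjoint_left.1 (hdisj h') (h ▸ hv) hs0)
    have hum : u ≠ m := fun h => hm w1 (h ▸ hu)
    have hvm : v ≠ m := fun h => hm w2 (h ▸ hv)
    have hsm : s0 ≠ m := fun h => hm w0 (h ▸ hs0)
    have hane := hab.ne
    have hbne := hbc.ne
    have hcne := hac.ne
    rcases huS with rfl | rfl | rfl <;> rcases hvS with rfl | rfl | rfl <;>
      rcases hs0S with rfl | rfl | rfl <;> rcases hmS with rfl | rfl | rfl <;>
        simp_all
  exact lemM H f hne hconn hdisj hadj w0 s0 hs0 hs0S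
    (fun w hw u hu v hv => hX w hw u hu w hw v hv)
    (fun w1 w2 _ hw1 hw2 u hu v hv => hX w1 hw1 u hu w2 hw2 v hv)

lemma lemM_placed {W : Type*} (H : SimpleGraph W) (f : W → Set V)
    (hne : ∀ w, (f w).Nonempty) (hconn : ∀ w, (G.induce (f w)).Connected)
    (hdisj : Pairwise fun w₁ w₂ => Disjoint (f w₁) (f w₂))
    (hadj : ∀ ⦃w₁ w₂⦄, H.Adj w₁ w₂ → ∃ v₁ ∈ f w₁, ∃ v₂ ∈ f w₂, G.Adj v₁ v₂)
    (wp wq wr : W) (p q r : V)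
    (hpS : p = a ∨ p = b ∨ p = c)
    (hcover : ∀ v, (v = a ∨ v = b ∨ v = c) → (v = p ∨ v = q ∨ v = r))
    (hp : p ∈ f wp) (hq : q ∈ f wq) (hr : r ∈ f wr)
    (hone : ∀ w, ∀ u ∈ f w, ∀ v ∈ f w,
      (u = a ∨ u = b ∨ u = c) → (v = a ∨ v = b ∨ v = c) → u = v)
    (hnadj : ¬ H.Adj wq wr) :
    IsMinor H (deltaY G a b c) := by
  have uniq : ∀ {x : V} {w w' : W}, x ∈ f w → x ∈ f w' → w = w' := by
    intro x w w' hx hx'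
    by_contra h'
    exact Set.disjoint_left.1 (hdisj h') hx hx'
  refine lemM H f hne hconn hdisj hadj wp p hp hpS ?_ ?_
  · intro w _ u hu v hv htri
    exact (tri_ne hab.ne hbc.ne hac.ne htri)
      (hone w u hu v hv (tri_mem htri).1 (tri_mem htri).2)
  · intro w1 w2 h12 hw1 hw2 u hu v hv htri
    have huv : u ≠ v := tri_ne hab.ne hbc.ne hac.ne htri
    have huS := hcover u (tri_mem htri).1
    have hvS := hcover v (tri_mem htri).2
    have hup : u ≠ p := fun h => hw1 (uniq hu (h ▸ hp) : w1 = wp)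
    have hvp : v ≠ p := fun h => hw2 (uniq hv (h ▸ hp) : w2 = wp)
    rcases huS with rfl | rfl | rfl <;> rcases hvS with rfl | rfl | rfl
    · exact hup rfl
    · exact hup rfl
    · exact hup rfl
    · exact hvp rfl
    · exact huv rfl
    · -- u = q, v = r
      have e1 : w1 = wq := uniq hu hq
      have e2 : w2 = wr := uniq hv hr
      exact hnadj (e1 ▸ e2 ▸ h12)
    · exact hvp rfl
    · -- u = r, v = q
      have e1 : w1 = wr := uniq hu hr
      have e2 : w2 = wq := uniq hv hq
      exact hnadj (e2 ▸ e1 ▸ h12).symm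
    · exact huv rfl

lemma driver {W : Type*} (H : SimpleGraph W) (hmin : IsMinor H G) :
    IsMinor H (deltaY G a b c) ∨
    ∃ (f : W → Set V) (wa wb wc : W),
      (∀ w, (f w).Nonempty) ∧ (∀ w, (G.induce (f w)).Connected) ∧
      (Pairwise fun w₁ w₂ => Disjoint (f w₁) (f w₂)) ∧
      (∀ ⦃w₁ w₂⦄, H.Adj w₁ w₂ → ∃ v₁ ∈ f w₁, ∃ v₂ ∈ f w₂, G.Adj v₁ v₂) ∧
      a ∈ f wa ∧ b ∈ f wb ∧ c ∈ f wc ∧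
      (∀ w, ∀ u ∈ f w, ∀ v ∈ f w,
        (u = a ∨ u = b ∨ u = c) → (v = a ∨ v = b ∨ v = c) → u = v) := by
  obtain ⟨f, hne, hconn, hdisj, hadj⟩ := hmin
  by_cases hpair : ∃ (w : W) (u v : V), u ∈ f w ∧ v ∈ f w ∧
      (u = a ∨ u = b ∨ u = c) ∧ (v = a ∨ v = b ∨ v = c) ∧ u ≠ v
  · obtain ⟨w0, u, v, hu, hv, huS, hvS, huv⟩ := hpair
    exact Or.inl (lemM_pair hab hbc hac H f hne hconn hdisj hadj w0 u v hu hv huS hvS huv)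
  · push_neg at hpair
    have hone : ∀ w, ∀ u ∈ f w, ∀ v ∈ f w,
        (u = a ∨ u = b ∨ u = c) → (v = a ∨ v = b ∨ v = c) → u = v := by
      intro w u hu v hv huS hvS
      exact hpair w u v hu hv huS hvS
    by_cases hall : (∃ wa, a ∈ f wa) ∧ (∃ wb, b ∈ f wb) ∧ (∃ wc, c ∈ f wc)
    · obtain ⟨⟨wa, ha⟩, ⟨wb, hb⟩, ⟨wc, hc⟩⟩ := hall
      exact Or.inr ⟨f, wa, wb, wc, hne, hconn, hdisj, hadj, ha, hb, hc, hone⟩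
    · have hmiss : ∃ m, (m = a ∨ m = b ∨ m = c) ∧ ∀ w, m ∉ f w := by
        push_neg at hall
        by_cases h1 : ∃ wa, a ∈ f wa
        · by_cases h2 : ∃ wb, b ∈ f wb
          · refine ⟨c, Or.inr (Or.inr rfl), ?_⟩
            have := hall h1 h2
            exact this
          · push_neg at h2
            exact ⟨b, Or.inr (Or.inl rfl), h2⟩
        · push_neg at h1
          exact ⟨a, Or.inl rfl, h1⟩
      obtain ⟨m, hmS, hm⟩ := hmiss
      by_cases hany : ∃ (w0 : W) (s0 : V), s0 ∈ f w0 ∧ (s0 = a ∨ s0 = b ∨ s0 = c)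
      · obtain ⟨w0, s0, hs0, hs0S⟩ := hany
        exact Or.inl (lemM_notall hab hbc hac H f hne hconn hdisj hadj
          w0 s0 hs0 hs0S m hmS hm)
      · push_neg at hany
        refine Or.inl (lemM0 H f hne hconn hdisj hadj ?_)
        intro w v hv hvS
        have := hany w v hv
        tauto

end Derived


lemma k33_three (x y z : Fin 3 ⊕ Fin 3) :
    ¬ K33.Adj y z ∨ ¬ K33.Adj x z ∨ ¬ K33.Adj x y := by
  rcases x with x | x <;> rcases y with y | y <;> rcases z with z | z <;> simp [K33]

lemma lemK33 (hab : G.Adj a b) (hbc : G.Adj b c) (hac : G.Adj a c)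
    (f : Fin 5 → Set V)
    (hne : ∀ w, (f w).Nonempty) (hconn : ∀ w, (G.induce (f w)).Connected)
    (hdisj : Pairwise fun w₁ w₂ => Disjoint (f w₁) (f w₂))
    (hadj : ∀ ⦃w₁ w₂⦄, K5.Adj w₁ w₂ → ∃ v₁ ∈ f w₁, ∃ v₂ ∈ f w₂, G.Adj v₁ v₂)
    (wa wb wc : Fin 5) (ha : a ∈ f wa) (hb : b ∈ f wb) (hc : c ∈ f wc)
    (hone : ∀ w, ∀ u ∈ f w, ∀ v ∈ f w,
      (u = a ∨ u = b ∨ u = c) → (v = a ∨ v = b ∨ v = c) → u = v) :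
    IsMinor K33 (deltaY G a b c) := by
  have uniq : ∀ {x : V} {w w' : Fin 5}, x ∈ f w → x ∈ f w' → w = w' := by
    intro x w w' hx hx'
    by_contra h'
    exact Set.disjoint_left.1 (hdisj h') hx hx'
  have nab : wa ≠ wb := fun h => hab.ne (hone wa a ha b (h ▸ hb) (Or.inl rfl) (Or.inr (Or.inl rfl)))
  have nbc : wb ≠ wc := fun h => hbc.ne (hone wb b hb c (h ▸ hc) (Or.inr (Or.inl rfl)) (Or.inr (Or.inr rfl)))
  have nac : wa ≠ wc := fun h => hac.ne (hone wa a ha c (h ▸ hc) (Or.inl rfl) (Or.inr (Or.inr rfl)))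
  have hextra : ∀ x y z : Fin 5, ∃ u v : Fin 5,
      u ≠ x ∧ u ≠ y ∧ u ≠ z ∧ v ≠ x ∧ v ≠ y ∧ v ≠ z ∧ u ≠ v := by decide
  obtain ⟨w4, w5, h4a, h4b, h4c, h5a, h5b, h5c, h45⟩ := hextra wa wb wc
  have notS4 : ∀ v ∈ f w4, ¬ (v = a ∨ v = b ∨ v = c) := by
    rintro v hv (rfl | rfl | rfl)
    · exact h4a (uniq hv ha)
    · exact h4b (uniq hv hb)
    · exact h4c (uniq hv hc)
  have notS5 : ∀ v ∈ f w5, ¬ (v = a ∨ v = b ∨ v = c) := by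
    rintro v hv (rfl | rfl | rfl)
    · exact h5a (uniq hv ha)
    · exact h5b (uniq hv hb)
    · exact h5c (uniq hv hc)
  set F : Fin 3 ⊕ Fin 3 → Set (Option V) :=
    Sum.elim (fun i => Option.some '' f (![wa, wb, wc] i))
      (fun i => ![({none} : Set (Option V)),
        Option.some '' f w4, Option.some '' f w5] i) with hF
  have hub : ∀ (w : Fin 5) (s : V), s ∈ f w → (s = a ∨ s = b ∨ s = c) →
      ∃ p ∈ Option.some '' f w, ∃ q ∈ ({none} : Set (Option V)),
        (deltaY G a b c).Adj p q :=
    fun w s hs hsS => ⟨some s, ⟨s, hs, rfl⟩, none, rfl, (adj_none hsS).symm⟩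
  have cross : ∀ (w w' : Fin 5), w ≠ w' → (∀ v ∈ f w', ¬ (v = a ∨ v = b ∨ v = c)) →
      ∃ p ∈ Option.some '' f w, ∃ q ∈ Option.some '' f w',
        (deltaY G a b c).Adj p q := by
    intro w w' hww hS'
    obtain ⟨v1, hv1, v2, hv2, h12⟩ := hadj (show K5.Adj w w' by simp [K5, hww])
    have ht : ¬ triEdge a b c v1 v2 := fun ht => hS' v2 hv2 (tri_mem ht).2
    exact ⟨some v1, ⟨v1, hv1, rfl⟩, some v2, ⟨v2, hv2, rfl⟩, adj_some h12 ht⟩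
  have conn' : ∀ (w : Fin 5), (∀ v ∈ f w, ∀ u ∈ f w, ¬ triEdge a b c v u) →
      (((deltaY G a b c)).induce (Option.some '' f w)).Connected :=
    fun w hw => induce_conn (f w) hw (hconn w)
  have honetri : ∀ (w : Fin 5), ∀ v ∈ f w, ∀ u ∈ f w, ¬ triEdge a b c v u := by
    intro w v hv u hu htri
    exact (tri_ne hab.ne hbc.ne hac.ne htri)
      (hone w v hv u hu (tri_mem htri).1 (tri_mem htri).2)
  have dji : ∀ {w w' : Fin 5}, w ≠ w' →
      Disjoint (Option.some '' f w) (Option.some '' f w') :=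
    fun h => Set.disjoint_image_of_injective (Option.some_injective V) (hdisj h)
  have djn : ∀ (s : Set V), Disjoint ({none} : Set (Option V)) (Option.some '' s) := by
    intro s
    rw [Set.disjoint_left]
    rintro x rfl ⟨v, hv, h⟩
    exact nomatch h
  have hcross : ∀ i j, ∃ p ∈ F (Sum.inl i), ∃ q ∈ F (Sum.inr j),
      (deltaY G a b c).Adj p q := by
    intro i j
    fin_cases i <;> fin_cases j
    · exact hub wa a ha (Or.inl rfl)
    · exact cross wa w4 h4a.symm notS4
    · exact cross wa w5 h5a.symm notS5
    · exact hub wb b hb (Or.inr (Or.inl rfl))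
    · exact cross wb w4 h4b.symm notS4
    · exact cross wb w5 h5b.symm notS5
    · exact hub wc c hc (Or.inr (Or.inr rfl))
    · exact cross wc w4 h4c.symm notS4
    · exact cross wc w5 h5c.symm notS5
  refine ⟨F, ?_, ?_, ?_, ?_⟩
  · rintro (i | i) <;> fin_cases i
    · exact (hne wa).image _
    · exact (hne wb).image _
    · exact (hne wc).image _
    · exact ⟨none, rfl⟩
    · exact (hne w4).image _
    · exact (hne w5).image _
  · rintro (i | i) <;> fin_cases i
    · exact conn' wa (honetri wa)
    · exact conn' wb (honetri wb)
    · exact conn' wc (honetri wc)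
    · exact conn_single _ _
    · exact conn' w4 (honetri w4)
    · exact conn' w5 (honetri w5)
  · rintro (i | i) (j | j) hxy <;> fin_cases i <;> fin_cases j <;>
      first
        | exact absurd rfl hxy
        | exact djn _
        | exact (djn _).symm
        | exact dji nab | exact dji nab.symm
        | exact dji nbc | exact dji nbc.symm
        | exact dji nac | exact dji nac.symm
        | exact dji h4a | exact dji h4a.symm
        | exact dji h4b | exact dji h4b.symm
        | exact dji h4c | exact dji h4c.symm
        | exact dji h5a | exact dji h5a.symm
        | exact dji h5b | exact dji h5b.symm
        | exact dji h5c | exact dji h5c.symm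
        | exact dji h45 | exact dji h45.symm
  · rintro (i | i) (j | j) h12
    · exact absurd h12 (by simp [K33])
    · exact hcross i j
    · obtain ⟨p, hp, q, hq, h⟩ := hcross j i
      exact ⟨q, hq, p, hp, h.symm⟩
    · exact absurd h12 (by simp [K33])

end Aux

/-- If `G'` is obtained from `G` by a ΔY move on a triangle of `G` and `G` is
nonplanar, then `G'` is nonplanar. -/
theorem stmt_8 {V : Type*} (G : SimpleGraph V) (a b c : V)
    (hab : G.Adj a b) (hbc : G.Adj b c) (hac : G.Adj a c)
    (hG : ¬ IsPlanar G) :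
    ¬ IsPlanar (deltaY G a b c) := by
  simp only [IsPlanar, not_and_or, not_not] at hG ⊢
  rcases hG with h5 | h33
  · rcases driver hab hbc hac K5 h5 with h |
      ⟨f, wa, wb, wc, hne, hconn, hdisj, hadj, ha, hb, hc, hone⟩
    · exact Or.inl h
    · exact Or.inr (lemK33 hab hbc hac f hne hconn hdisj hadj wa wb wc ha hb hc hone)
  · rcases driver hab hbc hac K33 h33 with h |
      ⟨f, wa, wb, wc, hne, hconn, hdisj, hadj, ha, hb, hc, hone⟩
    · exact Or.inr h
    · rcases k33_three wa wb wc with hn | hn | hn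
      · exact Or.inr (lemM_placed hab hbc hac K33 f hne hconn hdisj hadj wa wb wc a b c
          (Or.inl rfl) (fun v hv => hv) ha hb hc hone hn)
      · exact Or.inr (lemM_placed hab hbc hac K33 f hne hconn hdisj hadj wb wa wc b a c
          (Or.inr (Or.inl rfl)) (fun v hv => by tauto) hb ha hc hone hn)
      · exact Or.inr (lemM_placed hab hbc hac K33 f hne hconn hdisj hadj wc wa wb c a b
          (Or.inr (Or.inr rfl)) (fun v hv => by tauto) hc ha hb hone hn)
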